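/- arXiv:1309.5668 — 8 statements merged into one kernel-verified Lean document; each statement's English description precedes it below -/
import Mathlib

section
/- Let Σ be a finite alphabet and let b₁, …, b_r ∈ Σⁿ be distinct strings. Then there exists an index i₀ ∈ [r] and a set S ⊆ [n] with |S| ≤ log₂ r such that the restriction of b_{i₀} to the coordinates in S differs from the restriction of b_i to S for every i ≠ i₀. -/
lemma stmt_0_key {A : Type*} {n : ℕ} :
    ∀ k : ℕ, ∀ T : Finset (Fin n → A), T.card ≤ k → T.Nonempty →
      ∃ x ∈ T, ∃ S : Finset (Fin n), 2 ^ S.card ≤ T.card ∧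
        ∀ y ∈ T, y ≠ x → ∃ j ∈ S, x j ≠ y j := by
  intro k
  classical
  induction k with
  | zero =>
    intro T hc hne
    have := Finset.card_pos.mpr hne
    omega
  | succ k ih =>
    intro T hc hne
    by_cases h1 : T.card = 1
    · obtain ⟨x, hx⟩ := Finset.card_eq_one.mp h1
      refine ⟨x, by simp [hx], ∅, by simp [h1], ?_⟩
      intro y hy hyx
      simp [hx] at hy
      exact absurd hy hyx
    · have h2 : 1 < T.card := by
        have := Finset.card_pos.mpr hne; omega
      obtain ⟨x, hx, y, hy, hxy⟩ := Finset.one_lt_card.mp h2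
      obtain ⟨j, hj⟩ : ∃ j, x j ≠ y j := Function.ne_iff.mp hxy
      set C₁ := T.filter (fun z => z j = x j) with hC₁
      set C₂ := T.filter (fun z => z j = y j) with hC₂
      have hd : Disjoint C₁ C₂ := by
        rw [Finset.disjoint_left]
        intro z hz1 hz2
        rw [hC₁, Finset.mem_filter] at hz1
        rw [hC₂, Finset.mem_filter] at hz2
        exact hj (hz1.2 ▸ hz2.2)
      have hsum : C₁.card + C₂.card ≤ T.card := by
        rw [← Finset.card_union_of_disjoint hd]
        exact Finset.card_le_card (Finset.union_subset (Finset.filter_subset _ _)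
          (Finset.filter_subset _ _))
      obtain ⟨v, hvmem, hvcard⟩ : ∃ v : A, (T.filter (fun z => z j = v)).Nonempty ∧
          2 * (T.filter (fun z => z j = v)).card ≤ T.card := by
        by_cases hle : C₁.card ≤ C₂.card
        · refine ⟨x j, ⟨x, Finset.mem_filter.mpr ⟨hx, rfl⟩⟩, ?_⟩
          rw [← hC₁]; omega
        · refine ⟨y j, ⟨y, Finset.mem_filter.mpr ⟨hy, rfl⟩⟩, ?_⟩
          rw [← hC₂]; omega
      set C := T.filter (fun z => z j = v) with hC
      have hCsub : C ⊆ T := Finset.filter_subset _ _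
      have hClt : C.card < T.card := by
        have := Finset.card_pos.mpr hvmem
        omega
      obtain ⟨x₀, hx₀, S, hScard, hSsep⟩ := ih C (by omega) hvmem
      have hx₀v : x₀ j = v := (Finset.mem_filter.mp hx₀).2
      refine ⟨x₀, hCsub hx₀, insert j S, ?_, ?_⟩
      · calc 2 ^ (insert j S).card ≤ 2 ^ (S.card + 1) :=
              Nat.pow_le_pow_right (by norm_num) (Finset.card_insert_le _ _)
          _ = 2 * 2 ^ S.card := by ring
          _ ≤ 2 * C.card := by omega
          _ ≤ T.card := hvcard
      · intro z hz hzx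
        by_cases hzj : x₀ j = z j
        · have hzC : z ∈ C := Finset.mem_filter.mpr ⟨hz, by rw [← hzj, hx₀v]⟩
          obtain ⟨j', hj', hne⟩ := hSsep z hzC hzx
          exact ⟨j', Finset.mem_insert_of_mem hj', hne⟩
        · exact ⟨j, Finset.mem_insert_self _ _, hzj⟩

/-- Among distinct strings `b 1, …, b r ∈ Σⁿ` there is an index `i₀`
and a set `S ⊆ [n]` with `|S| ≤ log₂ r` such that `b i₀` restricted to `S`
differs from `b i` restricted to `S` for every `i ≠ i₀`. -/
theorem stmt_0 {A : Type*} [Fintype A] {n r : ℕ} (hr : 0 < r)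
    (b : Fin r → (Fin n → A)) (hb : Function.Injective b) :
    ∃ (i₀ : Fin r) (S : Finset (Fin n)),
      (S.card : ℝ) ≤ Real.logb 2 r ∧
      ∀ i : Fin r, i ≠ i₀ → ∃ j ∈ S, b i₀ j ≠ b i j := by
  classical
  set T := Finset.image b Finset.univ with hT
  have hTcard : T.card = r := by
    rw [hT, Finset.card_image_of_injective _ hb, Finset.card_univ, Fintype.card_fin]
  have hTne : T.Nonempty := by
    rw [← Finset.card_pos, hTcard]; exact hr
  obtain ⟨x, hx, S, hScard, hSsep⟩ := stmt_0_key T.card T le_rfl hTne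
  obtain ⟨i₀, -, hi₀⟩ := Finset.mem_image.mp hx
  refine ⟨i₀, S, ?_, ?_⟩
  · have h1 : (2 : ℝ) ^ (S.card : ℕ) ≤ (r : ℝ) := by
      rw [hTcard] at hScard
      exact_mod_cast hScard
    calc (S.card : ℝ) = Real.logb 2 (2 ^ (S.card : ℕ)) := by
          rw [Real.logb_pow]; simp [Real.logb_self_eq_one]
      _ ≤ Real.logb 2 r := by gcongr <;> norm_num
  · intro i hi
    have hbi : b i ∈ T := Finset.mem_image_of_mem b (Finset.mem_univ i)
    have hne : b i ≠ x := by
      rw [← hi₀]; exact fun h => hi (hb h)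
    obtain ⟨j', hj', hne'⟩ := hSsep (b i) hbi hne
    exact ⟨j', hj', by rw [hi₀]; exact hne'⟩
end

section
/- Let F be a field and let f₁,…,f_r ∈ F[x₁,…,x_n] each have total degree at most d, with |F| > d. Then for any α ∈ Fⁿ, the F-linear span of the vectors of Hasse derivatives {∂_{x^a}(f)(α) : a ∈ ℕⁿ} ⊆ F^r equals the F-linear span of the evaluation vectors {f(β) : β ∈ Fⁿ} ⊆ F^r, where f = (f₁,…,f_r). -/
open MvPolynomial

/-- The Hasse derivative `∂_{x^a}(f)` evaluated at `α`: the coefficient of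
`x^a` in the shifted polynomial `f(x + α)`. -/
noncomputable def hasseAt {σ : Type*} {F : Type*} [CommSemiring F]
    (f : MvPolynomial σ F) (a : σ →₀ ℕ) (α : σ → F) : F :=
  MvPolynomial.coeff a
    (MvPolynomial.bind₁ (fun i => MvPolynomial.X i + MvPolynomial.C (α i)) f)

/-- A multivariate polynomial of total degree at most `d` over a field with more than
`d` elements which vanishes everywhere is zero. -/
lemma myVanish {F : Type*} [Field F] {d : ℕ} (hF : (d : Cardinal) < Cardinal.mk F) :
    ∀ {n : ℕ} (g : MvPolynomial (Fin n) F), g.totalDegree ≤ d →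
      (∀ β : Fin n → F, MvPolynomial.eval β g = 0) → g = 0 := by
  intro n
  induction n with
  | zero =>
    intro g _ h
    have hc := h 0
    rw [g.eq_C_of_isEmpty, eval_C] at hc
    rw [g.eq_C_of_isEmpty, hc, map_zero]
  | succ m ih =>
    intro g hdeg h
    have key : ∀ i : ℕ, (finSuccEquiv F m g).coeff i = 0 := by
      intro i
      by_cases hi : (finSuccEquiv F m g).coeff i = 0
      · exact hi
      · refine ih _ (le_trans (le_trans (Nat.le_add_right _ i)
          (totalDegree_coeff_finSuccEquiv_add_le g i hi)) hdeg) ?_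
        intro β
        have hphi : (Polynomial.map (eval β) (finSuccEquiv F m g)) = 0 := by
          apply Polynomial.eq_zero_of_forall_eval_zero_of_natDegree_lt_card
          · intro t
            rw [← eval_eq_eval_mv_eval']
            exact h _
          · refine lt_of_le_of_lt ?_ hF
            have h1 : (Polynomial.map (eval β) (finSuccEquiv F m g)).natDegree ≤
                (finSuccEquiv F m g).natDegree := Polynomial.natDegree_map_le
            have h2 := natDegree_finSuccEquiv g
            have h3 := degreeOf_le_totalDegree g 0
            have : (Polynomial.map (eval β) (finSuccEquiv F m g)).natDegree ≤ d := by omega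
            exact_mod_cast Nat.cast_le.mpr this
        calc eval β ((finSuccEquiv F m g).coeff i)
            = (Polynomial.map (eval β) (finSuccEquiv F m g)).coeff i :=
              (coeff_eval_eq_eval_coeff (s' := β) (f := finSuccEquiv F m g) (i := i)).symm
          _ = 0 := by rw [hphi, Polynomial.coeff_zero]
    have : finSuccEquiv F m g = 0 := Polynomial.ext (by simpa using key)
    exact (map_eq_zero_iff _ (finSuccEquiv F m).injective).mp this

/-- For polynomials `f₁,…,f_r` of total degree at most `d` over a
field with more than `d` elements, the span of all Hasse-derivative vectors at
any point `α` equals the span of all evaluation vectors. -/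
theorem stmt_2 {F : Type*} [Field F] {n r d : ℕ}
    (hF : (d : Cardinal) < Cardinal.mk F)
    (f : Fin r → MvPolynomial (Fin n) F)
    (hdeg : ∀ i, (f i).totalDegree ≤ d) (α : Fin n → F) :
    Submodule.span F
        {v : Fin r → F | ∃ a : Fin n →₀ ℕ, v = fun i => hasseAt (f i) a α}
      = Submodule.span F
        {v : Fin r → F | ∃ β : Fin n → F, v = fun i => MvPolynomial.eval β (f i)} := by
  classical
  set u : Fin n → MvPolynomial (Fin n) F := fun j => X j + C (α j) with hu
  set g : Fin r → MvPolynomial (Fin n) F := fun i => bind₁ u (f i) with hg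
  have hasse_eq : ∀ (a : Fin n →₀ ℕ) (i : Fin r), hasseAt (f i) a α = coeff a (g i) :=
    fun a i => rfl
  have eval_g : ∀ (β : Fin n → F) (i : Fin r),
      eval β (g i) = eval (fun j => β j + α j) (f i) := by
    intro β i
    rw [hg]
    show (eval₂Hom (RingHom.id F) β) (bind₁ u (f i)) = _
    rw [eval₂Hom_bind₁]
    refine eval₂Hom_congr rfl (funext fun j => ?_) rfl
    simp [u]
  apply le_antisymm
  · -- hasse vectors ⊆ span of eval vectors
    rw [Submodule.span_le]
    rintro _ ⟨a, rfl⟩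
    rw [SetLike.mem_coe]
    apply (Subspace.forall_mem_dualAnnihilator_apply_eq_zero_iff _ _).mp
    intro φ hφ
    rw [Submodule.mem_dualAnnihilator] at hφ
    set c : Fin r → F := fun i => φ (fun j => if i = j then 1 else 0) with hc
    have hφ' : ∀ v : Fin r → F, φ v = ∑ i, v i * c i := by
      intro v
      conv_lhs => rw [pi_eq_sum_univ v]
      rw [map_sum]
      exact Finset.sum_congr rfl fun i _ => by rw [map_smul, smul_eq_mul]
    set h : MvPolynomial (Fin n) F := ∑ i, C (c i) * f i with hh
    have hdegh : h.totalDegree ≤ d := by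
      refine le_trans (totalDegree_finset_sum _ _) (Finset.sup_le fun i _ => ?_)
      refine le_trans (totalDegree_mul _ _) ?_
      simpa [totalDegree_C] using hdeg i
    have hzero : ∀ β : Fin n → F, eval β h = 0 := by
      intro β
      have heval : eval β h = φ (fun i => eval β (f i)) := by
        rw [hφ', hh, map_sum]
        exact Finset.sum_congr rfl fun i _ => by rw [map_mul, eval_C, mul_comm]
      rw [heval]
      exact hφ _ (Submodule.subset_span ⟨β, rfl⟩)
    have h0 : h = 0 := myVanish hF h hdegh hzero
    rw [hφ']
    have hs : ∑ i, hasseAt (f i) a α * c i = coeff a (bind₁ u h) := by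
      rw [hh, map_sum, coeff_sum]
      refine Finset.sum_congr rfl fun i _ => ?_
      rw [map_mul, bind₁_C_right, coeff_C_mul, hasse_eq, mul_comm]
    rw [hs, h0, map_zero, coeff_zero]
  · -- eval vectors ⊆ span of hasse vectors
    rw [Submodule.span_le]
    rintro _ ⟨β, rfl⟩
    set A : Finset (Fin n →₀ ℕ) := Finset.univ.biUnion (fun i : Fin r => (g i).support) with hA
    set γ : Fin n → F := fun j => β j - α j with hγ
    have hβ : (fun i => eval β (f i)) = fun i => eval γ (g i) := by
      funext i
      rw [eval_g γ i]
      have hb : (fun j => γ j + α j) = β := by funext j; simp [hγ]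
      rw [hb]
    rw [hβ, SetLike.mem_coe]
    have hsum : (fun i => eval γ (g i)) =
        ∑ a ∈ A, (∏ j, γ j ^ a j) • (fun i => hasseAt (f i) a α) := by
      funext i
      rw [Finset.sum_apply]
      simp only [Pi.smul_apply, smul_eq_mul]
      have hsub : (g i).support ⊆ A :=
        fun a ha => Finset.mem_biUnion.mpr ⟨i, Finset.mem_univ i, ha⟩
      rw [eval_eq' γ (g i), Finset.sum_subset hsub
          (fun a _ ha => by rw [notMem_support_iff.mp ha, zero_mul])]
      exact Finset.sum_congr rfl fun a _ => by rw [hasse_eq, mul_comm]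
    rw [hsum]
    exact Submodule.sum_mem _ fun a _ =>
      Submodule.smul_mem _ _ (Submodule.subset_span ⟨a, rfl⟩)
end

section
/- Let x^{b₁},…,x^{b_r} be distinct monomials in n variables of individual degree < d over a field F. Then there exist a set T ⊆ [n] with |T| ≤ ⌊log₂ r⌋, coefficients c_a ∈ F indexed by exponent vectors a with supp(a) ⊆ T and individual degree < d, and an index i₀ ∈ [r], such that the differential operator Δ = ∑_a c_a ∂_{x^a} satisfies Δ(x^{b_i})(1,…,1) = 1 if i = i₀ and 0 otherwise. -/
open Finset

private lemma key_int (d u v : ℕ) (hu : u < d) :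
    ∑ t ∈ Finset.range d, (-1:ℤ)^(t+v) * (t.choose v) * (u.choose t)
      = if u = v then 1 else 0 := by
  have h1 : ∑ t ∈ Finset.range d, (-1:ℤ)^(t+v) * (t.choose v) * (u.choose t)
      = ∑ t ∈ Finset.range (u+1), (-1:ℤ)^(t+v) * (t.choose v) * (u.choose t) := by
    refine (Finset.sum_subset (Finset.range_subset_range.2 hu) ?_).symm
    intro t ht hts
    have htu : u < t := by
      simp only [Finset.mem_range] at ht hts; omega
    simp [Nat.choose_eq_zero_of_lt htu]
  rw [h1]
  rcases lt_or_ge u v with h | h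
  · rw [if_neg (by omega)]
    apply Finset.sum_eq_zero
    intro t ht
    have : t < v := by simp only [Finset.mem_range] at ht; omega
    simp [Nat.choose_eq_zero_of_lt this]
  · have h2 : ∑ t ∈ Finset.range (u+1), (-1:ℤ)^(t+v) * (t.choose v) * (u.choose t)
        = ∑ t ∈ Finset.Ico v (u+1), (-1:ℤ)^(t+v) * (t.choose v) * (u.choose t) := by
      refine (Finset.sum_subset ?_ ?_).symm
      · intro t ht; simp only [Finset.mem_Ico] at ht; simp only [Finset.mem_range]; omega
      · intro t ht hts
        have : t < v := by
          simp only [Finset.mem_range] at ht; simp only [Finset.mem_Ico] at hts; omega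
        simp [Nat.choose_eq_zero_of_lt this]
    rw [h2, Finset.sum_Ico_eq_sum_range]
    have h3 : ∀ s ∈ Finset.range (u+1-v),
        (-1:ℤ)^(v+s+v) * ((v+s).choose v) * (u.choose (v+s))
          = (u.choose v : ℤ) * ((-1:ℤ)^s * ((u-v).choose s)) := by
      intro s hs
      have hsu : v + s ≤ u := by simp only [Finset.mem_range] at hs; omega
      have hc : u.choose (v+s) * (v+s).choose v = u.choose v * (u-v).choose s := by
        have := Nat.choose_mul (n := u) (Nat.le_add_right v s)
        simpa using this
      have hsign : (-1:ℤ)^(v+s+v) = (-1:ℤ)^s := by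
        rw [show v+s+v = s+2*v by ring, pow_add, pow_mul]; norm_num
      have hc' := congrArg (Nat.cast : ℕ → ℤ) hc
      push_cast at hc'
      rw [hsign]
      linear_combination (-1:ℤ)^s * hc'
    rw [Finset.sum_congr rfl h3, ← Finset.mul_sum]
    have h4 : u+1-v = (u-v)+1 := by omega
    rw [h4, Int.alternating_sum_range_choose]
    rcases eq_or_ne u v with rfl | huv
    · simp
    · rw [if_neg huv, if_neg (by omega), mul_zero]

private lemma key_field {F : Type*} [Field F] (d u v : ℕ) (hu : u < d) :
    ∑ k ∈ Finset.range d, ((-1:F)^(k+v) * ((k.choose v : ℕ) : F)) * ((u.choose k : ℕ) : F)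
      = if u = v then 1 else 0 := by
  have h := congrArg (fun z : ℤ => (z : F)) (key_int d u v hu)
  push_cast at h
  exact h

private lemma half_le {a b c : ℕ} (h : a + b ≤ c) (hab : a ≤ b) : a ≤ c / 2 := by omega

private lemma sep {n d : ℕ} (s : Finset (Fin n → Fin d)) (hs : s.Nonempty) :
    ∃ (T : Finset (Fin n)) (v₀ : Fin n → Fin d), v₀ ∈ s ∧
      T.card ≤ Nat.log 2 s.card ∧
      ∀ w ∈ s, (∀ j ∈ T, w j = v₀ j) → w = v₀ := by
  classical
  induction s using Finset.strongInductionOn with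
  | _ s ih =>
  rcases eq_or_lt_of_le (Finset.one_le_card.2 hs) with h1 | h2
  · obtain ⟨v₀, hv₀⟩ := Finset.card_eq_one.1 h1.symm
    refine ⟨∅, v₀, by simp [hv₀], by simp, ?_⟩
    intro w hw _
    rw [hv₀] at hw; simpa using hw
  · obtain ⟨u, hu, w, hw, huw⟩ := Finset.one_lt_card.1 h2
    obtain ⟨j, hj⟩ := Function.ne_iff.1 huw
    set su := s.filter (fun x => x j = u j) with hsu
    set sw := s.filter (fun x => x j = w j) with hsw
    have hdisj : Disjoint su sw := by
      rw [Finset.disjoint_left]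
      intro x hx1 hx2
      rw [hsu, Finset.mem_filter] at hx1
      rw [hsw, Finset.mem_filter] at hx2
      exact hj (hx1.2.symm.trans hx2.2)
    have hcards : su.card + sw.card ≤ s.card := by
      rw [← Finset.card_union_of_disjoint hdisj]
      exact Finset.card_le_card
        (Finset.union_subset (Finset.filter_subset _ _) (Finset.filter_subset _ _))
    have hune : su.Nonempty := ⟨u, Finset.mem_filter.2 ⟨hu, rfl⟩⟩
    have hwne : sw.Nonempty := ⟨w, Finset.mem_filter.2 ⟨hw, rfl⟩⟩
    have hcards' : sw.card + su.card ≤ s.card := by omega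
    have key : ∃ t₀ : Fin d, (s.filter (fun x => x j = t₀)).Nonempty ∧
        (s.filter (fun x => x j = t₀)).card ≤ s.card / 2 := by
      rcases le_total su.card sw.card with hle | hle
      · exact ⟨u j, hune, half_le hcards hle⟩
      · exact ⟨w j, hwne, half_le hcards' hle⟩
    obtain ⟨t₀, hne', hcard'⟩ := key
    set s' := s.filter (fun x => x j = t₀) with hs'
    have hmiss : ∃ x ∈ s, x ∉ s' := by
      by_cases h : u j = t₀
      · exact ⟨w, hw, fun hmem => hj (h.trans ((Finset.mem_filter.1 hmem).2).symm)⟩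
      · exact ⟨u, hu, fun hmem => h (Finset.mem_filter.1 hmem).2⟩
    have hss : s' ⊂ s := (Finset.ssubset_iff_of_subset (Finset.filter_subset _ _)).2 hmiss
    obtain ⟨T', v₀, hv₀, hT'card, huniq⟩ := ih s' hss hne'
    have hlog : Nat.log 2 s'.card ≤ Nat.log 2 s.card - 1 := by
      calc Nat.log 2 s'.card ≤ Nat.log 2 (s.card / 2) := Nat.log_mono_right hcard'
        _ = Nat.log 2 s.card - 1 := Nat.log_div_base 2 s.card
    have hpos : 0 < Nat.log 2 s.card := Nat.log_pos one_lt_two h2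
    refine ⟨insert j T', v₀, Finset.filter_subset _ _ hv₀, ?_, ?_⟩
    · calc (insert j T').card ≤ T'.card + 1 := Finset.card_insert_le _ _
        _ ≤ Nat.log 2 s.card := by omega
    · intro w' hw' hagree
      have hvj : v₀ j = t₀ := (Finset.mem_filter.1 hv₀).2
      have hwj : w' j = t₀ := by
        rw [hagree j (Finset.mem_insert_self _ _), hvj]
      exact huniq w' (Finset.mem_filter.2 ⟨hw', hwj⟩)
        (fun j' hj' => hagree j' (Finset.mem_insert_of_mem hj'))

/-- Given distinct monomials `x^{b₁},…,x^{b_r}` of individual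
degree `< d` (exponent vectors `b i : Fin n → Fin d`), there is a set
`T ⊆ [n]` with `|T| ≤ ⌊log₂ r⌋`, coefficients `c_a` supported on exponent
vectors `a` with `supp(a) ⊆ T`, and an index `i₀` such that the differential
operator `Δ = ∑_a c_a ∂_{x^a}` satisfies `Δ(x^{b_i})(1,…,1) = δ_{i,i₀}`.
Here `∂_{x^a}(x^b)(1,…,1) = ∏_j C(b_j, a_j)`. -/
theorem stmt_7 {F : Type*} [Field F] {n d r : ℕ} (hr : 0 < r)
    (b : Fin r → (Fin n → Fin d)) (hb : Function.Injective b) :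
    ∃ (T : Finset (Fin n)) (i₀ : Fin r) (c : (Fin n → Fin d) → F),
      T.card ≤ Nat.log 2 r ∧
      (∀ a : Fin n → Fin d, (∃ j ∉ T, (a j : ℕ) ≠ 0) → c a = 0) ∧
      (∀ i : Fin r,
        ∑ a : Fin n → Fin d, c a * ∏ j, ((b i j : ℕ).choose (a j : ℕ) : F)
          = if i = i₀ then 1 else 0) := by
  classical
  have hne : (Finset.univ.image b).Nonempty :=
    ⟨b ⟨0, hr⟩, Finset.mem_image_of_mem b (Finset.mem_univ _)⟩
  obtain ⟨T, v₀, hv₀, hTcard, huniq⟩ := sep (Finset.univ.image b) hne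
  have himg : (Finset.univ.image b).card = r := by
    rw [Finset.card_image_of_injective _ hb, Finset.card_univ, Fintype.card_fin]
  rw [himg] at hTcard
  obtain ⟨i₀, -, rfl⟩ := Finset.mem_image.1 hv₀
  set g : ∀ _ : Fin n, Fin d → F := fun j t =>
    if j ∈ T then (-1:F)^((t:ℕ)+(b i₀ j:ℕ)) * (((t:ℕ).choose (b i₀ j:ℕ) : ℕ) : F)
    else if (t : ℕ) = 0 then 1 else 0 with hg
  refine ⟨T, i₀, fun a => ∏ j, g j (a j), hTcard, ?_, ?_⟩
  · rintro a ⟨j, hjT, hja⟩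
    refine Finset.prod_eq_zero (Finset.mem_univ j) ?_
    rw [hg]
    simp [hjT, hja]
  · intro i
    have hstep : ∀ a : Fin n → Fin d,
        (∏ j, g j (a j)) * ∏ j, ((b i j : ℕ).choose (a j : ℕ) : F)
          = ∏ j, (g j (a j) * ((b i j : ℕ).choose (a j : ℕ) : F)) := by
      intro a; rw [Finset.prod_mul_distrib]
    rw [Finset.sum_congr rfl (fun a _ => hstep a)]
    have hfac := Finset.prod_univ_sum (fun _ : Fin n => (Finset.univ : Finset (Fin d)))
      (fun j t => g j t * ((b i j : ℕ).choose (t : ℕ) : F))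
    rw [Fintype.piFinset_univ] at hfac
    rw [← hfac]
    have hfactor : ∀ j : Fin n,
        (∑ t : Fin d, g j t * ((b i j : ℕ).choose (t : ℕ) : F))
          = if j ∈ T then (if b i j = b i₀ j then (1:F) else 0) else 1 := by
      intro j
      have hd : 0 < d := (b i j).pos
      by_cases hjT : j ∈ T
      · simp only [hg, hjT, if_true]
        rw [Fin.sum_univ_eq_sum_range
          (fun k => ((-1:F)^(k+(b i₀ j:ℕ)) * ((k.choose (b i₀ j:ℕ) : ℕ) : F))
            * (((b i j : ℕ).choose k : ℕ) : F)) d]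
        rw [key_field d (b i j : ℕ) (b i₀ j : ℕ) (b i j).isLt]
        simp [Fin.val_eq_val]
      · simp only [hg, hjT, if_false]
        rw [Fin.sum_univ_eq_sum_range
          (fun k => (if k = 0 then (1:F) else 0) * (((b i j : ℕ).choose k : ℕ) : F)) d]
        rw [Finset.sum_eq_single 0]
        · simp
        · intro k hk hk0; simp [hk0]
        · intro h0; exact absurd (Finset.mem_range.2 hd) h0
    rw [Finset.prod_congr rfl (fun j _ => hfactor j)]
    rcases eq_or_ne i i₀ with rfl | hii
    · simp
    · rw [if_neg hii]
      have hnot : ¬ ∀ j ∈ T, b i j = b i₀ j := by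
        intro hall
        exact hii (hb (huniq (b i) (Finset.mem_image_of_mem b (Finset.mem_univ _)) hall))
      push_neg at hnot
      obtain ⟨j, hjT, hjne⟩ := hnot
      refine Finset.prod_eq_zero (Finset.mem_univ j) ?_
      rw [if_pos hjT, if_neg hjne]
end

section
/- Let x^{b₁},…,x^{b_r} be distinct monomials in n variables of individual degree < d over a field F. Then there is a permutation π of [r] and differential operators Δ₁,…,Δ_r such that Δ_i(x^{b_{π(j)}})(1,…,1) = 1 when i = j and = 0 when j < i, and each Δ_i is an F-linear combination of Hasse derivatives ∂_{x^a} with individual degree of a less than d and supp(a) contained in a set of size at most ⌊log₂ i⌋. -/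
open Finset in
lemma split_lemma {n d : ℕ} (S : Finset (Fin n → Fin d))
    (h2 : ∃ u ∈ S, ∃ v ∈ S, u ≠ v) :
    ∃ A : Finset (Fin n → Fin d), A ⊆ S ∧ A.Nonempty ∧ (S \ A).Nonempty ∧
      2 * A.card ≤ S.card ∧
      ∃ l : Fin n, ∀ x ∈ A, ∀ y ∈ S \ A, y l ≠ x l := by
  obtain ⟨u, hu, v, hv, huv⟩ := h2
  have hl : ∃ l, u l ≠ v l := by
    by_contra h
    push_neg at h
    exact huv (funext h)
  obtain ⟨l₀, hl₀⟩ := hl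
  classical
  set C := S.filter (fun x => x l₀ = u l₀) with hC
  have huC : u ∈ C := by simp [hC, hu]
  have hvC : v ∉ C := by
    simp only [hC, Finset.mem_filter, not_and]
    intro _ h
    exact hl₀ h.symm
  have hCS : C ⊆ S := filter_subset _ _
  by_cases hcard : 2 * C.card ≤ S.card
  · refine ⟨C, hCS, ⟨u, huC⟩, ⟨v, by simp [Finset.mem_sdiff, hv, hvC]⟩, hcard, l₀, ?_⟩
    intro x hx y hy
    have hx' : x l₀ = u l₀ := (Finset.mem_filter.mp hx).2
    have hy' : y l₀ ≠ u l₀ := by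
      rcases Finset.mem_sdiff.mp hy with ⟨hyS, hyC⟩
      intro h; exact hyC (Finset.mem_filter.mpr ⟨hyS, h⟩)
    rw [hx']; exact hy'
  · refine ⟨S \ C, sdiff_subset, ⟨v, by simp [Finset.mem_sdiff, hv, hvC]⟩,
      ⟨u, by simp [Finset.mem_sdiff, hu, huC]⟩, ?_, l₀, ?_⟩
    · have h1 : (S \ C).card = S.card - C.card := card_sdiff_of_subset hCS
      have h2 : C.card ≤ S.card := card_le_card hCS
      omega
    · intro x hx y hy
      have hx' : x l₀ ≠ u l₀ := by
        rcases Finset.mem_sdiff.mp hx with ⟨hxS, hxC⟩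
        intro h; exact hxC (Finset.mem_filter.mpr ⟨hxS, h⟩)
      have hy' : y l₀ = u l₀ := by
        rcases Finset.mem_sdiff.mp hy with ⟨hyS, hyC⟩
        have : y ∈ C := by
          by_contra h
          exact hyC (Finset.mem_sdiff.mpr ⟨hyS, h⟩)
        exact (Finset.mem_filter.mp this).2
      rw [hy']; exact fun h => hx' h.symm

lemma comb_lemma {n d : ℕ} : ∀ (m : ℕ) (S : Finset (Fin n → Fin d)), S.card ≤ m →
    ∃ L : List (Fin n → Fin d), L.Nodup ∧ L.toFinset = S ∧
      ∀ (i : ℕ) (hi : i < L.length), ∃ T : Finset (Fin n),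
        T.card ≤ Nat.log 2 (i + 1) ∧
        ∀ (j : ℕ) (hj : j < i), ∃ l ∈ T, (L[j]'(hj.trans hi)) l ≠ (L[i]'hi) l := by
  classical
  intro m
  induction m with
  | zero =>
    intro S hS
    have : S = ∅ := Finset.card_eq_zero.mp (Nat.le_zero.mp hS)
    subst this
    exact ⟨[], List.nodup_nil, by simp, fun i hi => by simp at hi⟩
  | succ m ih =>
    intro S hS
    by_cases h2 : ∃ u ∈ S, ∃ v ∈ S, u ≠ v
    · obtain ⟨A, hAS, hAne, hBne, hAcard, l₀, hl₀⟩ := split_lemma S h2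
      set B := S \ A with hB
      have hAm : A.card ≤ m := by
        have h1 : A.card < S.card := Finset.card_lt_card (Finset.ssubset_iff_of_subset hAS |>.mpr
          (by obtain ⟨y, hy⟩ := hBne; exact ⟨y, (Finset.mem_sdiff.mp hy).1, (Finset.mem_sdiff.mp hy).2⟩))
        omega
      have hBm : B.card ≤ m := by
        have h1 : B.card < S.card := Finset.card_lt_card (Finset.ssubset_iff_of_subset Finset.sdiff_subset |>.mpr
          (by obtain ⟨y, hy⟩ := hAne; exact ⟨y, hAS hy, by simp [hB, hy]⟩))
        omega
      obtain ⟨LB, hBnd, hBtf, hBprop⟩ := ih B hBm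
      obtain ⟨LA, hAnd, hAtf, hAprop⟩ := ih A hAm
      have hdisj : List.Disjoint LB LA := by
        intro a haB haA
        have h1 : a ∈ B := hBtf ▸ List.mem_toFinset.mpr haB
        have h2 : a ∈ A := hAtf ▸ List.mem_toFinset.mpr haA
        exact (Finset.mem_sdiff.mp h1).2 h2
      have hlenB : LB.length = B.card := by rw [← List.toFinset_card_of_nodup hBnd, hBtf]
      have hlenA : LA.length = A.card := by rw [← List.toFinset_card_of_nodup hAnd, hAtf]
      have hBA : A.card ≤ B.card := by
        have : B.card = S.card - A.card := Finset.card_sdiff_of_subset hAS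
        have : A.card ≤ S.card := Finset.card_le_card hAS
        omega
      refine ⟨LB ++ LA, List.Nodup.append hBnd hAnd hdisj, ?_, ?_⟩
      · rw [List.toFinset_append, hBtf, hAtf, hB, Finset.sdiff_union_of_subset hAS]
      · intro i hi
        rw [List.length_append] at hi
        by_cases hiB : i < LB.length
        · obtain ⟨T, hT1, hT2⟩ := hBprop i hiB
          refine ⟨T, hT1, fun j hj => ?_⟩
          obtain ⟨l, hl, hne⟩ := hT2 j hj
          refine ⟨l, hl, ?_⟩
          rwa [List.getElem_append_left (hj.trans hiB), List.getElem_append_left hiB]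
        · push_neg at hiB
          set k := i - LB.length with hk
          have hkA : k < LA.length := by omega
          obtain ⟨T, hT1, hT2⟩ := hAprop k hkA
          refine ⟨insert l₀ T, ?_, ?_⟩
          · have h1 : (insert l₀ T).card ≤ T.card + 1 := Finset.card_insert_le _ _
            have h2 : Nat.log 2 (k + 1) + 1 ≤ Nat.log 2 (i + 1) := by
              have h3 : (k + 1) * 2 ≤ i + 1 := by omega
              calc Nat.log 2 (k + 1) + 1 = Nat.log 2 ((k + 1) * 2) :=
                    (Nat.log_mul_base (by norm_num) (by omega)).symm
                _ ≤ Nat.log 2 (i + 1) := Nat.log_mono_right h3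
            omega
          · intro j hj
            by_cases hjB : j < LB.length
            · refine ⟨l₀, Finset.mem_insert_self _ _, ?_⟩
              have hmemB : (LB ++ LA)[j]'(by rw [List.length_append]; omega) ∈ B := by
                rw [List.getElem_append_left hjB, ← hBtf]
                exact List.mem_toFinset.mpr (List.getElem_mem _)
              have hmemA : (LB ++ LA)[i]'(by rw [List.length_append]; omega) ∈ A := by
                rw [List.getElem_append_right hiB]
                exact hAtf ▸ List.mem_toFinset.mpr (List.getElem_mem _)
              exact hl₀ _ hmemA _ hmemB
            · push_neg at hjB
              have hjk : j - LB.length < k := by omega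
              obtain ⟨l, hl, hne⟩ := hT2 (j - LB.length) hjk
              refine ⟨l, Finset.mem_insert_of_mem hl, ?_⟩
              rwa [List.getElem_append_right hjB, List.getElem_append_right hiB]
    · -- all elements equal: card ≤ 1
      push_neg at h2
      have hcard : S.card ≤ 1 := Finset.card_le_one.mpr (fun a ha b hb => h2 a ha b hb)
      refine ⟨S.toList, Finset.nodup_toList S, Finset.toList_toFinset S, ?_⟩
      intro i hi
      have : S.toList.length ≤ 1 := by rwa [Finset.length_toList]
      refine ⟨∅, by simp, fun j hj => ?_⟩
      omega

open Matrix in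
lemma binom_inv (F : Type*) [Field F] (d : ℕ) :
    ∃ N : Fin d → Fin d → F, ∀ x y : Fin d,
      (∑ k : Fin d, ((x : ℕ).choose (k : ℕ) : F) * N k y) = if x = y then 1 else 0 := by
  set M : Matrix (Fin d) (Fin d) F := Matrix.of fun x y => ((x : ℕ).choose (y : ℕ) : F) with hM
  have htri : Mᵀ.BlockTriangular id := by
    intro i j hij
    simp only [Matrix.transpose_apply, hM, Matrix.of_apply]
    rw [Nat.choose_eq_zero_of_lt (by exact_mod_cast hij)]
    simp
  have hdet : M.det = 1 := by
    rw [← Matrix.det_transpose, Matrix.det_of_upperTriangular htri]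
    simp [hM]
  have hmul : M * M⁻¹ = 1 := Matrix.mul_nonsing_inv M (by simp [hdet])
  refine ⟨fun x y => M⁻¹ x y, fun x y => ?_⟩
  have h2 := congrFun (congrFun hmul x) y
  rw [Matrix.mul_apply] at h2
  simpa [Matrix.one_apply, hM] using h2


/-- Given distinct monomials `x^{b₁},…,x^{b_r}` of individual
degree `< d`, there is a permutation `π` of `[r]` and differential operators
`Δ₁,…,Δ_r` (each `Δ_i = ∑_a c i a · ∂_{x^a}` supported on exponent vectors `a`
with `supp(a)` contained in a set `T i` of size at most `⌊log₂ i⌋`) such that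
`Δ_i(x^{b_{π(j)}})(1,…,1) = 1` when `i = j` and `= 0` when `j < i`.
Here `∂_{x^a}(x^b)(1,…,1) = ∏_j C(b_j, a_j)`. -/
theorem stmt_8 {F : Type*} [Field F] {n d r : ℕ}
    (b : Fin r → (Fin n → Fin d)) (hb : Function.Injective b) :
    ∃ (π : Equiv.Perm (Fin r)) (c : Fin r → (Fin n → Fin d) → F)
      (T : Fin r → Finset (Fin n)),
      (∀ i : Fin r, (T i).card ≤ Nat.log 2 (i.1 + 1)) ∧
      (∀ i : Fin r, ∀ a : Fin n → Fin d,
        (∃ j ∉ T i, (a j : ℕ) ≠ 0) → c i a = 0) ∧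
      (∀ i j : Fin r,
        (i = j →
          ∑ a : Fin n → Fin d,
            c i a * ∏ l, ((b (π j) l : ℕ).choose (a l : ℕ) : F) = 1) ∧
        (j < i →
          ∑ a : Fin n → Fin d,
            c i a * ∏ l, ((b (π j) l : ℕ).choose (a l : ℕ) : F) = 0)) := by
  classical
  rcases Nat.eq_zero_or_pos r with hr | hr
  · subst hr
    exact ⟨Equiv.refl _, Fin.elim0, Fin.elim0, fun i => i.elim0, fun i => i.elim0,
      fun i => i.elim0⟩
  rcases Nat.eq_zero_or_pos n with hn | hn
  · subst hn
    refine ⟨Equiv.refl _, fun _ _ => 1, fun _ => ∅, fun i => by simp, ?_, ?_⟩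
    · rintro i a ⟨j, _⟩; exact j.elim0
    · intro i j
      constructor
      · intro hij
        simp only [one_mul]
        rw [Finset.sum_congr rfl (fun a _ => by rw [Finset.prod_of_isEmpty])]
        simp
      · intro hij
        have : Subsingleton (Fin 0 → Fin d) := ⟨fun a b => funext fun l => l.elim0⟩
        exact absurd (hb (Subsingleton.elim _ _) : j = i) (ne_of_lt hij)
  rcases Nat.eq_zero_or_pos d with hd | hd
  · subst hd
    exact absurd (b ⟨0, hr⟩ ⟨0, hn⟩).isLt (by omega)
  -- main case
  set S := Finset.univ.image b with hSdef
  have hScard : S.card = r := by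
    rw [hSdef, Finset.card_image_of_injective _ hb, Finset.card_univ, Fintype.card_fin]
  obtain ⟨L, hnd, htf, hprop⟩ := comb_lemma S.card S le_rfl
  have hlen : L.length = r := by rw [← List.toFinset_card_of_nodup hnd, htf, hScard]
  have hmem : ∀ i : Fin r, ∃ k : Fin r, b k = L[i.1]'(by omega) := by
    intro i
    have h1 : L[i.1]'(by omega) ∈ L.toFinset := List.mem_toFinset.mpr (List.getElem_mem _)
    rw [htf] at h1
    obtain ⟨k, _, hk⟩ := Finset.mem_image.mp h1
    exact ⟨k, hk⟩
  choose g hg using hmem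
  have hginj : Function.Injective g := by
    intro i j h
    have h1 : L[i.1]'(by omega) = L[j.1]'(by omega) := by rw [← hg i, ← hg j, h]
    exact Fin.ext (hnd.getElem_inj_iff.mp h1)
  let π : Equiv.Perm (Fin r) := Equiv.ofBijective g (Finite.injective_iff_bijective.mp hginj)
  have hπ : ∀ i : Fin r, b (π i) = L[i.1]'(by omega) := hg
  have hprop' : ∀ i : Fin r, ∃ T : Finset (Fin n), T.card ≤ Nat.log 2 (i.1 + 1) ∧
      ∀ j : Fin r, j < i → ∃ l ∈ T, b (π j) l ≠ b (π i) l := by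
    intro i
    obtain ⟨T, hT1, hT2⟩ := hprop i.1 (by omega)
    refine ⟨T, hT1, fun j hj => ?_⟩
    obtain ⟨l, hl, hne⟩ := hT2 j.1 hj
    exact ⟨l, hl, by rw [hπ i, hπ j]; exact hne⟩
  choose T hT1 hT2 using hprop'
  obtain ⟨N, hN⟩ := binom_inv F d
  set c : Fin r → (Fin n → Fin d) → F := fun i a =>
    ∏ l : Fin n, (if l ∈ T i then N (a l) (b (π i) l) else if (a l : ℕ) = 0 then 1 else 0)
    with hc
  have key : ∀ i j : Fin r,
      ∑ a : Fin n → Fin d, c i a * ∏ l, ((b (π j) l : ℕ).choose (a l : ℕ) : F)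
        = ∏ l ∈ T i, (if b (π j) l = b (π i) l then (1 : F) else 0) := by
    intro i j
    have step1 : ∀ a : Fin n → Fin d,
        c i a * ∏ l, ((b (π j) l : ℕ).choose (a l : ℕ) : F)
          = ∏ l, ((if l ∈ T i then N (a l) (b (π i) l) else if (a l : ℕ) = 0 then 1 else 0)
              * ((b (π j) l : ℕ).choose (a l : ℕ) : F)) := by
      intro a
      rw [hc, ← Finset.prod_mul_distrib]
    have hps := Finset.prod_univ_sum (fun _ : Fin n => (Finset.univ : Finset (Fin d)))
      (fun l x => (if l ∈ T i then N x (b (π i) l) else if (x : ℕ) = 0 then 1 else 0)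
        * ((b (π j) l : ℕ).choose (x : ℕ) : F))
    rw [Fintype.piFinset_univ] at hps
    rw [Finset.sum_congr rfl (fun a _ => step1 a), ← hps]
    have step2 : ∀ l : Fin n,
        (∑ x : Fin d, (if l ∈ T i then N x (b (π i) l) else if (x : ℕ) = 0 then 1 else 0)
          * ((b (π j) l : ℕ).choose (x : ℕ) : F))
        = if l ∈ T i then (if b (π j) l = b (π i) l then (1 : F) else 0) else 1 := by
      intro l
      by_cases hl : l ∈ T i
      · simp only [hl, if_true]
        rw [← hN (b (π j) l) (b (π i) l)]
        exact Finset.sum_congr rfl (fun x _ => mul_comm _ _)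
      · simp only [hl, if_false]
        rw [Finset.sum_eq_single (⟨0, hd⟩ : Fin d)]
        · simp
        · intro x _ hx
          have hx0 : (x : ℕ) ≠ 0 := fun h => hx (Fin.ext h)
          simp [hx0]
        · simp
    rw [Finset.prod_congr rfl (fun l _ => step2 l), Finset.prod_ite_mem, Finset.univ_inter]
  refine ⟨π, c, T, hT1, ?_, ?_⟩
  · rintro i a ⟨j, hj, hja⟩
    rw [hc]
    refine Finset.prod_eq_zero (Finset.mem_univ j) ?_
    simp [hj, hja]
  · intro i j
    constructor
    · intro hij
      subst hij
      rw [key]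
      exact Finset.prod_eq_one (fun l _ => by simp)
    · intro hij
      rw [key]
      obtain ⟨l, hl, hne⟩ := hT2 i j hij
      exact Finset.prod_eq_zero hl (by simp [hne])
end

section
/- Let T(t) ∈ F[t]^{D×D}, with D = dⁿ indexed by exponent vectors in {0,…,d−1}ⁿ, be defined by T_{a,b} = C(b,a)·t^{b−a} (the transfer matrix of the shift x ↦ x + t), and let T_r(1) be the submatrix of T evaluated at t = (1,…,1) restricted to rows indexed by exponent vectors a with |a|₀ ≤ ⌊log₂ r⌋. Then every r columns of T_r(1) are linearly independent; i.e., T_r(1) is the parity check matrix of a code of distance > r. -/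
set_option linter.unnecessarySeqFocus false

open Finset

lemma exists_lambda {F : Type*} [Field F] (E : Finset ℕ) {e₀ : ℕ} (he₀ : e₀ ∈ E) :
    ∃ lam : ℕ → F, ∀ e ∈ E, ∑ t ∈ E, lam t * ((e.choose t : ℕ) : F)
      = if e = e₀ then 1 else 0 := by
  classical
  set k := E.card with hk
  let σ : Fin k ≃o {x // x ∈ E} := E.orderIsoOfFin rfl
  set M : Matrix (Fin k) (Fin k) F := fun i j => ((σ i : ℕ).choose (σ j : ℕ) : F) with hM
  have htri : M.BlockTriangular ⇑OrderDual.toDual := by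
    intro i j hij
    have : (σ i : ℕ) < (σ j : ℕ) := by
      have : i < j := hij
      exact_mod_cast σ.strictMono this
    simp [hM, Nat.choose_eq_zero_of_lt this]
  have hdet : M.det = 1 := by
    rw [Matrix.det_of_lowerTriangular M htri]
    apply Finset.prod_eq_one
    intro i _
    simp [hM]
  have hunit : IsUnit M.det := by rw [hdet]; exact isUnit_one
  set i₀ : Fin k := σ.symm ⟨e₀, he₀⟩ with hi₀
  set μ : Fin k → F := M⁻¹.mulVec (Pi.single i₀ 1) with hμ
  have hsolve : M.mulVec μ = Pi.single i₀ 1 := by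
    rw [hμ, Matrix.mulVec_mulVec, Matrix.mul_nonsing_inv M hunit, Matrix.one_mulVec]
  refine ⟨fun t => if h : t ∈ E then μ (σ.symm ⟨t, h⟩) else 0, ?_⟩
  intro e he
  have hEim : E = Finset.image (fun j : Fin k => ((σ j : ℕ))) Finset.univ := by
    ext x
    simp only [Finset.mem_image, Finset.mem_univ, true_and]
    constructor
    · intro hx; exact ⟨σ.symm ⟨x, hx⟩, by simp⟩
    · rintro ⟨j, rfl⟩; exact (σ j).2
  have hinj : ∀ x ∈ (Finset.univ : Finset (Fin k)), ∀ y ∈ Finset.univ,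
      ((σ x : ℕ)) = ((σ y : ℕ)) → x = y := by
    intro x _ y _ hxy
    exact σ.injective (Subtype.ext hxy)
  have := hsolve
  have key : ∑ t ∈ E, (if h : t ∈ E then μ (σ.symm ⟨t, h⟩) else 0) * ((e.choose t : ℕ) : F)
      = ∑ j : Fin k, M (σ.symm ⟨e, he⟩) j * μ j := by
    refine Finset.sum_bij' (fun t ht => σ.symm ⟨t, ht⟩) (fun j _ => ((σ j : ℕ))) ?_ ?_ ?_ ?_ ?_
    · intro t ht; exact Finset.mem_univ _
    · intro j _; exact (σ j).2
    · intro t ht; simp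
    · intro j _; apply σ.injective; simp
    · intro t ht
      rw [dif_pos ht, mul_comm]
      congr 2 <;> simp [hM]
  rw [key]
  have := congrFun hsolve (σ.symm ⟨e, he⟩)
  rw [Matrix.mulVec] at this
  simp only [dotProduct] at this
  rw [this]
  by_cases h : e = e₀
  · subst h; simp [hi₀]
  · rw [if_neg h, Pi.single_apply, if_neg]
    intro hc
    apply h
    have := congrArg σ hc
    simp [hi₀] at this
    exact this

lemma core {F : Type*} [Field F] {n : ℕ} {ι : Type*} [DecidableEq ι] (r : ℕ) :
    ∀ S : Finset ι, S.card ≤ r → ∀ bv : ι → (Fin n → ℕ),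
    (∀ i ∈ S, ∀ i' ∈ S, bv i = bv i' → i = i') →
    ∀ c : ι → F, (∀ i ∈ S, c i ≠ 0) → S.Nonempty →
    ∃ a : Fin n → ℕ,
      (Finset.univ.filter fun j => a j ≠ 0).card ≤ Nat.log 2 r
      ∧ (∀ j, ∃ i ∈ S, a j ≤ bv i j)
      ∧ ∑ i ∈ S, c i * ∏ j, ((bv i j).choose (a j) : F) ≠ 0 := by
  induction r using Nat.strong_induction_on with
  | _ r ih =>
  intro S hcard bv hinj c hc hne
  classical
  by_cases hone : S.card = 1
  · obtain ⟨i, hi⟩ := Finset.card_eq_one.mp hone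
    refine ⟨fun _ => 0, by simp, ?_, ?_⟩
    · intro j; exact ⟨i, by simp [hi], Nat.zero_le _⟩
    · subst hi
      simpa using hc i (Finset.mem_singleton_self i)
  · -- S.card ≥ 2
    have h2 : 2 ≤ S.card := by
      have h1 : 1 ≤ S.card := Finset.card_pos.mpr hne
      omega
    have hr2' : 2 ≤ r := le_trans h2 hcard
    obtain ⟨i₁, hi₁, i₂, hi₂, hne12⟩ := Finset.one_lt_card.mp h2
    have hbne : bv i₁ ≠ bv i₂ := fun h => hne12 (hinj i₁ hi₁ i₂ hi₂ h)
    obtain ⟨j₀, hj₀⟩ := Function.ne_iff.mp hbne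
    set E : Finset ℕ := S.image (fun i => bv i j₀) with hE
    obtain ⟨e₀, he₀E, hmin⟩ := Finset.exists_min_image E
      (fun e => (S.filter fun i => bv i j₀ = e).card)
      ⟨bv i₁ j₀, Finset.mem_image_of_mem _ hi₁⟩
    set S₀ := S.filter (fun i => bv i j₀ = e₀) with hS₀
    obtain ⟨i', hi', hne'⟩ : ∃ i' ∈ S, bv i' j₀ ≠ e₀ := by
      by_contra h
      push_neg at h
      exact hj₀ ((h i₁ hi₁).trans (h i₂ hi₂).symm)
    have hS₀card : S₀.card ≤ r / 2 := by
      have hA : S₀.card ≤ (S.filter fun i => bv i j₀ = bv i' j₀).card :=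
        hmin _ (Finset.mem_image_of_mem _ hi')
      have hdisj : Disjoint S₀ (S.filter fun i => bv i j₀ = bv i' j₀) := by
        rw [Finset.disjoint_left]
        intro x hx hx'
        exact hne' (((Finset.mem_filter.mp hx').2).symm.trans (Finset.mem_filter.mp hx).2)
      have hB : S₀.card + (S.filter fun i => bv i j₀ = bv i' j₀).card ≤ S.card := by
        rw [← Finset.card_union_of_disjoint hdisj]
        exact Finset.card_le_card (Finset.union_subset (Finset.filter_subset _ _) (Finset.filter_subset _ _))
      have : 2 * S₀.card ≤ r := by omega
      omega
    have hr2 : r / 2 < r := Nat.div_lt_self (by omega) one_lt_two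
    have hS₀ne : S₀.Nonempty := by
      obtain ⟨i, hiS, hie⟩ := Finset.mem_image.mp he₀E
      exact ⟨i, Finset.mem_filter.mpr ⟨hiS, hie⟩⟩
    obtain ⟨a', hsupp', hbound', hsum'⟩ := ih (r / 2) hr2 S₀ hS₀card bv
      (fun i hi i' hi' => hinj i (Finset.filter_subset _ _ hi) i' (Finset.filter_subset _ _ hi'))
      c (fun i hi => hc i (Finset.filter_subset _ _ hi)) hS₀ne
    set P : ι → F := fun i => ∏ j ∈ Finset.univ.erase j₀, ((bv i j).choose (a' j) : F) with hP
    have hg0 : ∑ i ∈ S₀, c i * P i ≠ 0 := by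
      intro h0
      apply hsum'
      have heq : ∀ i ∈ S₀, c i * ∏ j, ((bv i j).choose (a' j) : F)
          = ((e₀.choose (a' j₀) : ℕ) : F) * (c i * P i) := by
        intro i hi
        have hbij : bv i j₀ = e₀ := (Finset.mem_filter.mp hi).2
        rw [← Finset.mul_prod_erase Finset.univ _ (Finset.mem_univ j₀), hbij, hP]
        ring
      rw [Finset.sum_congr rfl heq, ← Finset.mul_sum, h0, mul_zero]
    obtain ⟨lam, hlam⟩ := exists_lambda (F := F) E he₀E
    have hprod : ∀ t : ℕ, ∀ i : ι,
        ∏ j, ((bv i j).choose ((Function.update a' j₀ t) j) : F)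
          = ((bv i j₀).choose t : F) * P i := by
      intro t i
      rw [← Finset.mul_prod_erase Finset.univ _ (Finset.mem_univ j₀)]
      congr 1
      · simp
      · apply Finset.prod_congr rfl
        intro j hj
        rw [Function.update_of_ne (Finset.mem_erase.mp hj).1]
    have hkey : ∑ t ∈ E, lam t *
        (∑ i ∈ S, c i * ∏ j, ((bv i j).choose ((Function.update a' j₀ t) j) : F))
        = ∑ i ∈ S₀, c i * P i := by
      have step1 : ∀ t ∈ E, lam t *
          (∑ i ∈ S, c i * ∏ j, ((bv i j).choose ((Function.update a' j₀ t) j) : F))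
          = ∑ i ∈ S, (lam t * ((bv i j₀).choose t : F)) * (c i * P i) := by
        intro t _
        rw [Finset.mul_sum]
        apply Finset.sum_congr rfl
        intro i _
        rw [hprod t i]
        ring
      rw [Finset.sum_congr rfl step1, Finset.sum_comm]
      have step2 : ∀ i ∈ S, ∑ t ∈ E, (lam t * ((bv i j₀).choose t : F)) * (c i * P i)
          = (if bv i j₀ = e₀ then c i * P i else 0) := by
        intro i hi
        rw [← Finset.sum_mul, hlam (bv i j₀) (Finset.mem_image_of_mem _ hi)]
        by_cases h : bv i j₀ = e₀ <;> simp [h]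
      rw [Finset.sum_congr rfl step2, ← Finset.sum_filter]
    obtain ⟨t, htE, hft⟩ : ∃ t ∈ E, lam t *
        (∑ i ∈ S, c i * ∏ j, ((bv i j).choose ((Function.update a' j₀ t) j) : F)) ≠ 0 := by
      by_contra h
      push_neg at h
      exact hg0 (hkey ▸ Finset.sum_eq_zero h)
    refine ⟨Function.update a' j₀ t, ?_, ?_, fun h0 => hft (by rw [h0, mul_zero])⟩
    · have hsub : (Finset.univ.filter fun j => Function.update a' j₀ t j ≠ 0)
          ⊆ insert j₀ (Finset.univ.filter fun j => a' j ≠ 0) := by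
        intro j hj
        rcases eq_or_ne j j₀ with rfl | hjj
        · exact Finset.mem_insert_self _ _
        · refine Finset.mem_insert_of_mem (Finset.mem_filter.mpr ⟨Finset.mem_univ _, ?_⟩)
          have := (Finset.mem_filter.mp hj).2
          rwa [Function.update_of_ne hjj] at this
      have hlog1 : 1 ≤ Nat.log 2 r := Nat.log_pos one_lt_two hr2'
      have hlogd : Nat.log 2 (r / 2) = Nat.log 2 r - 1 := Nat.log_div_base 2 r
      calc (Finset.univ.filter fun j => Function.update a' j₀ t j ≠ 0).card
          ≤ (insert j₀ (Finset.univ.filter fun j => a' j ≠ 0)).card := Finset.card_le_card hsub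
        _ ≤ (Finset.univ.filter fun j => a' j ≠ 0).card + 1 := Finset.card_insert_le _ _
        _ ≤ Nat.log 2 (r / 2) + 1 := by omega
        _ ≤ Nat.log 2 r := by omega
    · intro j
      rcases eq_or_ne j j₀ with rfl | hjj
      · obtain ⟨i, hiS, hie⟩ := Finset.mem_image.mp htE
        exact ⟨i, hiS, by rw [Function.update_self, ← hie]⟩
      · obtain ⟨i, hiS, hie⟩ := hbound' j
        exact ⟨i, Finset.filter_subset _ _ hiS, by rwa [Function.update_of_ne hjj]⟩


/-- The transfer matrix `T_r(1)`, whose rows are indexed by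
exponent vectors `a ∈ {0,…,d-1}ⁿ` with support at most `⌊log₂ r⌋`, whose
columns are indexed by exponent vectors `b ∈ {0,…,d-1}ⁿ`, and whose
`(a,b)`-entry is `C(b,a) = ∏_j C(b_j,a_j)`, has every `r` columns linearly
independent (it is the parity check matrix of a distance `> r` code).  That
is: for any `r` distinct column indices `b 1,…,b r`, the corresponding columns
are linearly independent over `F`. -/
theorem stmt_9 {F : Type*} [Field F] {n d r : ℕ}
    (b : Fin r → (Fin n → Fin d)) (hb : Function.Injective b) :
    LinearIndependent F
      (fun i : Fin r =>
        fun a : {a : Fin n → Fin d //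
            (Finset.univ.filter fun j => (a j : ℕ) ≠ 0).card ≤ Nat.log 2 r} =>
          ∏ j, ((b i j : ℕ).choose (a.1 j : ℕ) : F)) := by

  classical
  rw [Fintype.linearIndependent_iff]
  intro g hg
  by_contra hcon
  push_neg at hcon
  obtain ⟨i₀, hi₀⟩ := hcon
  set T : Finset (Fin r) := Finset.univ.filter (fun i => g i ≠ 0) with hT
  have hi₀T : i₀ ∈ T := Finset.mem_filter.mpr ⟨Finset.mem_univ _, hi₀⟩
  have hTcard : T.card ≤ r := le_trans (Finset.card_le_univ T) (by simp)
  set bv : Fin r → (Fin n → ℕ) := fun i j => (b i j : ℕ) with hbv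
  have hinj : ∀ i ∈ T, ∀ i' ∈ T, bv i = bv i' → i = i' := by
    intro i _ i' _ h
    apply hb
    funext j
    exact Fin.val_injective (congrFun h j)
  obtain ⟨a, hsupp, hbound, hsum⟩ := core (F := F) r T hTcard bv hinj g
    (fun i hi => (Finset.mem_filter.mp hi).2) ⟨i₀, hi₀T⟩
  have had : ∀ j, a j < d := by
    intro j
    obtain ⟨i, _, hle⟩ := hbound j
    exact lt_of_le_of_lt hle (b i j).2
  set ahat : Fin n → Fin d := fun j => ⟨a j, had j⟩ with hahat
  have hsupp' : (Finset.univ.filter fun j => ((ahat j : ℕ)) ≠ 0).card ≤ Nat.log 2 r := hsupp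
  have := congrFun hg ⟨ahat, hsupp'⟩
  simp only [Finset.sum_apply, Pi.smul_apply, smul_eq_mul, Pi.zero_apply] at this
  apply hsum
  rw [← this]
  exact Finset.sum_subset (Finset.subset_univ T) (fun i _ hiT => by
    have hgi : g i = 0 := by
      by_contra h
      exact hiT (Finset.mem_filter.mpr ⟨Finset.mem_univ _, h⟩)
    simp [hgi])
end

section
/- Let f ∈ F[x₁,…,x_n] with |F| > n, and suppose f is nonzero if and only if f has some monomial x^a with |a|₀ ≤ ℓ and nonzero coefficient. Let G = G^{SV}_{n,ℓ} be the Shpilka–Volkovich generator: for distinct ξ₀,…,ξ_n ∈ F, define G : F^ℓ × F^ℓ → Fⁿ by G(y,z)_k = ∑_{j=1}^{ℓ} L_k(z_j)·y_j where L_k is the Lagrange interpolation polynomial with L_k(ξ_i) = δ_{ik}. Then f ≢ 0 if and only if f∘G ≢ 0 as a polynomial in (y,z). -/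
open MvPolynomial in
lemma sv_aux_ne_zero {σ τ R : Type*} [CommRing R] [DecidableEq σ] [DecidableEq τ]
    (s : Finset σ) (e : σ → τ) (he : Set.InjOn e s)
    (f : MvPolynomial σ R) (a : σ →₀ ℕ) (has : a.support ⊆ s)
    (hca : coeff a f ≠ 0) :
    aeval (fun k => if k ∈ s then (X (e k) : MvPolynomial τ R) else 0) f ≠ 0 := by
  set g : σ → MvPolynomial τ R := fun k => if k ∈ s then X (e k) else 0 with hg
  have haf : a ∈ f.support := mem_support_iff.mpr hca
  have key : coeff (Finsupp.mapDomain e a) (aeval g f) = coeff a f := by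
    rw [aeval_def, eval₂_eq, coeff_sum]
    have hterm : ∀ d ∈ f.support,
        coeff (Finsupp.mapDomain e a)
          ((algebraMap R (MvPolynomial τ R)) (coeff d f) * ∏ i ∈ d.support, g i ^ d i)
        = if d.support ⊆ s ∧ Finsupp.mapDomain e d = Finsupp.mapDomain e a
            then coeff d f else 0 := by
      intro d _
      by_cases hd : d.support ⊆ s
      · have h1 : (∏ i ∈ d.support, g i ^ d i)
            = rename e (∏ i ∈ d.support, (X i : MvPolynomial σ R) ^ d i) := by
          rw [map_prod]
          refine Finset.prod_congr rfl fun i hi => ?_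
          rw [map_pow, rename_X, hg]
          simp only [if_pos (hd hi)]
        have h2 : (∏ i ∈ d.support, (X i : MvPolynomial σ R) ^ d i) = monomial d 1 := by
          rw [monomial_eq, C_1, one_mul]; rfl
        have hprod : (∏ i ∈ d.support, g i ^ d i)
            = monomial (Finsupp.mapDomain e d) (1 : R) := by
          rw [h1, h2, rename_monomial]
        rw [hprod, algebraMap_eq, C_mul_monomial, mul_one, coeff_monomial]
        by_cases hmd : Finsupp.mapDomain e d = Finsupp.mapDomain e a
        · rw [if_pos hmd, if_pos ⟨hd, hmd⟩]
        · rw [if_neg hmd, if_neg (by tauto)]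
      · obtain ⟨i, hi, his⟩ : ∃ i ∈ d.support, i ∉ s := by
          simpa [Finset.subset_iff] using hd
        have hz : (∏ i ∈ d.support, g i ^ d i) = 0 := by
          refine Finset.prod_eq_zero hi ?_
          rw [hg]; simp only [if_neg his]
          exact zero_pow (by simpa using hi)
        rw [hz, mul_zero, coeff_zero, if_neg (by tauto)]
    rw [Finset.sum_congr rfl hterm, Finset.sum_eq_single_of_mem a haf]
    · rw [if_pos ⟨has, rfl⟩]
    · intro d hdf hda
      rw [if_neg]
      rintro ⟨h1, h2⟩
      exact hda (Finsupp.mapDomain_injOn (s : Set σ) he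
        (by exact_mod_cast Finset.coe_subset.mpr h1)
        (by exact_mod_cast Finset.coe_subset.mpr has) h2)
  intro h0
  rw [h0, coeff_zero] at key
  exact hca key.symm

open MvPolynomial in
/-- If a polynomial `f` over a field `F` (with `n+1` distinct
elements `ξ₀,…,ξ_n`) is nonzero iff it has a nonzero coefficient on some
monomial of support at most `ℓ`, then `f ≢ 0` iff `f ∘ G^{SV}_{n,ℓ} ≢ 0`,
where the Shpilka–Volkovich generator substitutes
`x_k ↦ ∑_{j=1}^{ℓ} L_k(z_j)·y_j` with `L_k` the Lagrange interpolation
polynomial satisfying `L_k(ξ_i) = δ_{ik}`. -/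
theorem stmt_10 {F : Type*} [Field F] {n ℓ : ℕ}
    (ξ : Fin (n + 1) → F) (hξ : Function.Injective ξ)
    (f : MvPolynomial (Fin n) F)
    (hf : f ≠ 0 ↔ ∃ a : Fin n →₀ ℕ,
      a.support.card ≤ ℓ ∧ MvPolynomial.coeff a f ≠ 0) :
    (f ≠ 0 ↔
      MvPolynomial.bind₁
        (fun k : Fin n =>
          ∑ j : Fin ℓ,
            Polynomial.eval₂ MvPolynomial.C
                (MvPolynomial.X (Sum.inr j) :
                  MvPolynomial (Fin ℓ ⊕ Fin ℓ) F)
                (Lagrange.basis Finset.univ ξ k.succ) *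
              MvPolynomial.X (Sum.inl j))
        f ≠ 0) := by
  classical
  set G : Fin n → MvPolynomial (Fin ℓ ⊕ Fin ℓ) F := fun k =>
    ∑ j : Fin ℓ,
      Polynomial.eval₂ MvPolynomial.C
          (MvPolynomial.X (Sum.inr j)) (Lagrange.basis Finset.univ ξ k.succ) *
        MvPolynomial.X (Sum.inl j) with hGdef
  constructor
  · intro hfne
    obtain ⟨a, hcard, hca⟩ := hf.mp hfne
    set s := a.support with hs
    rcases Nat.eq_zero_or_pos ℓ with hl | hl
    · -- ℓ = 0 : G = 0, a = 0, constant coefficient survives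
      subst hl
      have ha0 : a = 0 := Finsupp.support_eq_empty.mp
        (Finset.card_eq_zero.mp (Nat.le_zero.mp hcard))
      have hG0 : G = fun _ => 0 := by funext k; rw [hGdef]; simp
      rw [hG0]
      have hb : bind₁ (fun _ : Fin n => (0 : MvPolynomial (Fin 0 ⊕ Fin 0) F)) f
          = aeval (fun _ : Fin n => (0 : MvPolynomial (Fin 0 ⊕ Fin 0) F)) f := rfl
      rw [hb, aeval_zero', algebraMap_eq]
      intro h0
      apply hca
      rw [ha0, ← constantCoeff_eq]
      simpa using (C_injective _ F (h0.trans C_0.symm))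
    · haveI : Nonempty (Fin ℓ) := ⟨⟨0, hl⟩⟩
      set e₀ : {x // x ∈ s} → Fin ℓ := fun x => Fin.castLE hcard (s.equivFin x) with he₀
      have he₀inj : Function.Injective e₀ := by
        intro x y hxy
        exact s.equivFin.injective (Fin.castLE_injective hcard hxy)
      set e : Fin n → Fin ℓ := fun k =>
        if h : k ∈ s then e₀ ⟨k, h⟩ else Classical.arbitrary _ with he
      have heinj : Set.InjOn e (s : Set (Fin n)) := by
        intro x hx y hy hxy
        have hx' : x ∈ s := hx
        have hy' : y ∈ s := hy
        rw [he] at hxy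
        simp only [dif_pos hx', dif_pos hy'] at hxy
        exact congrArg Subtype.val (he₀inj hxy)
      set ζ : Fin ℓ → F := fun j =>
        if h : ∃ k : {x // x ∈ s}, e₀ k = j
          then ξ (Fin.succ (h.choose : Fin n)) else ξ 0 with hζ
      -- value of Lagrange basis polynomials at the chosen points
      have hL : ∀ (k : Fin n) (j : Fin ℓ),
          Polynomial.eval (ζ j) (Lagrange.basis Finset.univ ξ k.succ)
          = if h : k ∈ s then (if e₀ ⟨k, h⟩ = j then 1 else 0) else 0 := by
        intro k j
        have hinj : Set.InjOn ξ (Finset.univ : Finset (Fin (n+1))) := hξ.injOn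
        rw [hζ]
        by_cases hex : ∃ k' : {x // x ∈ s}, e₀ k' = j
        · simp only [dif_pos hex]
          have hk'spec : e₀ hex.choose = j := hex.choose_spec
          by_cases hks : k ∈ s
          · by_cases heq : e₀ ⟨k, hks⟩ = j
            · have hck : hex.choose = ⟨k, hks⟩ := he₀inj (by rw [hk'spec, heq])
              rw [dif_pos hks, if_pos heq, hck]
              exact Lagrange.eval_basis_self hinj (Finset.mem_univ _)
            · have hne : (k.succ : Fin (n+1)) ≠ Fin.succ (hex.choose : Fin n) := by
                intro hcon
                have hkk : k = (hex.choose : Fin n) := Fin.succ_injective _ hcon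
                apply heq
                rw [← hk'spec]
                congr 1
                exact Subtype.ext hkk
              rw [dif_pos hks, if_neg heq]
              exact Lagrange.eval_basis_of_ne hne (Finset.mem_univ _)
          · have hne : (k.succ : Fin (n+1)) ≠ Fin.succ (hex.choose : Fin n) := by
              intro hcon
              have hkk : k = (hex.choose : Fin n) := Fin.succ_injective _ hcon
              exact hks (hkk ▸ (hex.choose).2)
            rw [dif_neg hks]
            exact Lagrange.eval_basis_of_ne hne (Finset.mem_univ _)
        · simp only [dif_neg hex]
          have hval : Polynomial.eval (ξ 0) (Lagrange.basis Finset.univ ξ k.succ) = 0 :=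
            Lagrange.eval_basis_of_ne (Fin.succ_ne_zero k) (Finset.mem_univ _)
          rw [hval]
          by_cases hks : k ∈ s
          · rw [dif_pos hks, if_neg (fun hj => hex ⟨⟨k, hks⟩, hj⟩)]
          · rw [dif_neg hks]
      -- the partial evaluation hom
      set hfun : Fin ℓ ⊕ Fin ℓ → MvPolynomial (Fin ℓ) F :=
        Sum.elim (fun j => X j) (fun j => C (ζ j)) with hhfun
      have hφG : ∀ k, aeval hfun (G k)
          = if k ∈ s then (X (e k) : MvPolynomial (Fin ℓ) F) else 0 := by
        intro k
        rw [hGdef]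
        simp only
        rw [map_sum]
        have hterm : ∀ j : Fin ℓ,
            aeval hfun (Polynomial.eval₂ C (X (Sum.inr j))
              (Lagrange.basis Finset.univ ξ k.succ) * X (Sum.inl j))
            = C (Polynomial.eval (ζ j) (Lagrange.basis Finset.univ ξ k.succ)) * X j := by
          intro j
          rw [map_mul]
          have h2 : aeval hfun (X (Sum.inl j) : MvPolynomial (Fin ℓ ⊕ Fin ℓ) F) = X j := by
            simp [hhfun]
          have h1 : aeval hfun (Polynomial.eval₂ C (X (Sum.inr j))
              (Lagrange.basis Finset.univ ξ k.succ))
              = C (Polynomial.eval (ζ j) (Lagrange.basis Finset.univ ξ k.succ)) := by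
            have e1 : Polynomial.eval₂ C (X (Sum.inr j) : MvPolynomial (Fin ℓ ⊕ Fin ℓ) F)
                (Lagrange.basis Finset.univ ξ k.succ)
                = Polynomial.aeval (X (Sum.inr j) : MvPolynomial (Fin ℓ ⊕ Fin ℓ) F)
                  (Lagrange.basis Finset.univ ξ k.succ) := by
              rw [Polynomial.aeval_def, algebraMap_eq]
            have h3 : aeval hfun (X (Sum.inr j) : MvPolynomial (Fin ℓ ⊕ Fin ℓ) F)
                = C (ζ j) := by simp [hhfun]
            rw [e1, ← Polynomial.aeval_algHom_apply, h3, ← algebraMap_eq,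
              Polynomial.aeval_algebraMap_apply_eq_algebraMap_eval, algebraMap_eq]
          rw [h1, h2]
        rw [Finset.sum_congr rfl (fun j _ => hterm j)]
        by_cases hks : k ∈ s
        · simp only [hL, dif_pos hks, if_pos hks, he, apply_ite C, C_1, C_0, ite_mul,
            one_mul, zero_mul]
          rw [Finset.sum_ite_eq Finset.univ (e₀ ⟨k, hks⟩) (fun j => (X j : MvPolynomial (Fin ℓ) F))]
          simp [dif_pos hks]
        · simp only [hL, dif_neg hks, if_neg hks, C_0, zero_mul]
          simp
      have hφbind : aeval hfun (bind₁ G f)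
          = aeval (fun k => if k ∈ s then (X (e k) : MvPolynomial (Fin ℓ) F) else 0) f := by
        rw [aeval_bind₁]
        have hfuneq : (fun i => aeval hfun (G i))
            = fun k => if k ∈ s then (X (e k) : MvPolynomial (Fin ℓ) F) else 0 := funext hφG
        rw [hfuneq]
      intro h0
      exact sv_aux_ne_zero s e heinj f a (by rw [hs]) hca
        (by rw [← hφbind, h0, map_zero])
  · intro h hf0
    exact h (by rw [hf0, map_zero])
end

section
/- Let x and y be disjoint sets of variables, F(x) ∈ F[x]^{r×r} and G(y) ∈ F[y]^{r×r} matrices of polynomials. If F is support-ℓ rank concentrated at α (i.e., Span_F{∂_{x^a}(F)(α) : |a|₀ ≤ ℓ} = Span_F{∂_{x^a}(F)(α) : all a}, viewing matrices as vectors in F^{r²}) and G is support-k rank concentrated at β, then the product F(x)·G(y) is support-(ℓ+k) rank concentrated at (α,β). -/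
open MvPolynomial Finsupp

section Aux
variable {σ τ : Type*} {F : Type*} [CommSemiring F]

lemma hasseAt_sum {ι : Type*} (s : Finset ι) (f : ι → MvPolynomial σ F)
    (a : σ →₀ ℕ) (α : σ → F) :
    hasseAt (∑ i ∈ s, f i) a α = ∑ i ∈ s, hasseAt (f i) a α := by
  simp [hasseAt, map_sum, MvPolynomial.coeff_sum]

lemma sumElim_eq_mapDomain (d : σ →₀ ℕ) (e : τ →₀ ℕ) :
    Finsupp.sumElim d e = d.mapDomain Sum.inl + e.mapDomain Sum.inr := by
  ext x
  cases x with
  | inl x =>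
      rw [Finsupp.add_apply, Finsupp.mapDomain_apply Sum.inl_injective,
        Finsupp.mapDomain_notin_range e (Sum.inl x) (by simp)]
      simp
  | inr y =>
      rw [Finsupp.add_apply, Finsupp.mapDomain_apply Sum.inr_injective,
        Finsupp.mapDomain_notin_range d (Sum.inr y) (by simp)]
      simp

lemma coeff_rename_inl_mul_inr (f : MvPolynomial σ F) (g : MvPolynomial τ F)
    (c : (σ ⊕ τ) →₀ ℕ) :
    MvPolynomial.coeff c (rename Sum.inl f * rename Sum.inr g)
      = MvPolynomial.coeff (c.comapDomain Sum.inl Sum.inl_injective.injOn) f *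
        MvPolynomial.coeff (c.comapDomain Sum.inr Sum.inr_injective.injOn) g := by
  classical
  induction f using MvPolynomial.induction_on' with
  | add p q hp hq => simp [add_mul, hp, hq, coeff_add, add_mul]
  | monomial d s =>
    induction g using MvPolynomial.induction_on' with
    | add p q hp hq => simp [mul_add, hp, hq, coeff_add, mul_add]
    | monomial e t =>
      rw [rename_monomial, rename_monomial, monomial_mul, coeff_monomial,
        coeff_monomial, coeff_monomial]
      have key : (d.mapDomain Sum.inl + e.mapDomain Sum.inr = c)
          ↔ (d = c.comapDomain Sum.inl Sum.inl_injective.injOn ∧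
             e = c.comapDomain Sum.inr Sum.inr_injective.injOn) := by
        rw [← sumElim_eq_mapDomain]
        constructor
        · rintro rfl
          constructor <;> ext x <;> simp
        · rintro ⟨rfl, rfl⟩
          ext x; cases x <;> simp
      by_cases h : d.mapDomain Sum.inl + e.mapDomain Sum.inr = c
      · obtain ⟨h1, h2⟩ := key.mp h
        rw [if_pos h, if_pos h1, if_pos h2]
      · rw [if_neg h]
        rcases not_and_or.mp (key.not.mp h) with h' | h'
        · rw [if_neg h', zero_mul]
        · rw [if_neg h', mul_zero]

lemma hasseAt_rename_mul (f : MvPolynomial σ F) (g : MvPolynomial τ F)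
    (c : (σ ⊕ τ) →₀ ℕ) (α : σ → F) (β : τ → F) :
    hasseAt (rename Sum.inl f * rename Sum.inr g) c (Sum.elim α β)
      = hasseAt f (c.comapDomain Sum.inl Sum.inl_injective.injOn) α *
        hasseAt g (c.comapDomain Sum.inr Sum.inr_injective.injOn) β := by
  unfold hasseAt
  rw [map_mul, bind₁_rename, bind₁_rename]
  have h1 : (bind₁ ((fun i => (X i : MvPolynomial (σ ⊕ τ) F) + C (Sum.elim α β i)) ∘ Sum.inl)) f
      = rename Sum.inl (bind₁ (fun i => (X i : MvPolynomial σ F) + C (α i)) f) := by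
    rw [rename_bind₁]
    have he : ((fun i => (X i : MvPolynomial (σ ⊕ τ) F) + C (Sum.elim α β i)) ∘ Sum.inl)
        = fun i => rename Sum.inl ((X i : MvPolynomial σ F) + C (α i)) := by
      funext i; simp
    rw [he]
  have h2 : (bind₁ ((fun i => (X i : MvPolynomial (σ ⊕ τ) F) + C (Sum.elim α β i)) ∘ Sum.inr)) g
      = rename Sum.inr (bind₁ (fun i => (X i : MvPolynomial τ F) + C (β i)) g) := by
    rw [rename_bind₁]
    have he : ((fun i => (X i : MvPolynomial (σ ⊕ τ) F) + C (Sum.elim α β i)) ∘ Sum.inr)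
        = fun i => rename Sum.inr ((X i : MvPolynomial τ F) + C (β i)) := by
      funext i; simp
    rw [he]
  rw [h1, h2, coeff_rename_inl_mul_inr]

lemma support_sumElim_card_le (d : σ →₀ ℕ) (e : τ →₀ ℕ) :
    (Finsupp.sumElim d e).support.card ≤ d.support.card + e.support.card := by
  classical
  have hsub : (Finsupp.sumElim d e).support ⊆
      d.support.map ⟨Sum.inl, Sum.inl_injective⟩ ∪ e.support.map ⟨Sum.inr, Sum.inr_injective⟩ := by
    intro x hx
    rw [Finsupp.mem_support_iff] at hx
    cases x with
    | inl x => simp only [Finsupp.sumElim_inl] at hx; simp [Finsupp.mem_support_iff, hx]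
    | inr y => simp only [Finsupp.sumElim_inr] at hx; simp [Finsupp.mem_support_iff, hx]
  calc (Finsupp.sumElim d e).support.card ≤ _ := Finset.card_le_card hsub
    _ ≤ _ := Finset.card_union_le _ _
    _ = d.support.card + e.support.card := by rw [Finset.card_map, Finset.card_map]

end Aux

section Aux2
variable {σ τ : Type*} {F : Type*} [CommSemiring F]

lemma comapDomain_sumElim_inl (d : σ →₀ ℕ) (e : τ →₀ ℕ) :
    (Finsupp.sumElim d e).comapDomain Sum.inl Sum.inl_injective.injOn = d := by
  ext x; simp [Finsupp.comapDomain_apply]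

lemma comapDomain_sumElim_inr (d : σ →₀ ℕ) (e : τ →₀ ℕ) :
    (Finsupp.sumElim d e).comapDomain Sum.inr Sum.inr_injective.injOn = e := by
  ext x; simp [Finsupp.comapDomain_apply]

lemma matrix_hasse_mul {r : ℕ} (Fm : Matrix (Fin r) (Fin r) (MvPolynomial σ F))
    (G : Matrix (Fin r) (Fin r) (MvPolynomial τ F)) (α : σ → F) (β : τ → F)
    (c : (σ ⊕ τ) →₀ ℕ) :
    (Matrix.of fun u v => hasseAt
        (((Fm.map (rename Sum.inl) * G.map (rename Sum.inr) :
            Matrix (Fin r) (Fin r) (MvPolynomial (σ ⊕ τ) F))) u v) c (Sum.elim α β))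
      = (Matrix.of fun u v =>
            hasseAt (Fm u v) (c.comapDomain Sum.inl Sum.inl_injective.injOn) α) *
        (Matrix.of fun u v =>
            hasseAt (G u v) (c.comapDomain Sum.inr Sum.inr_injective.injOn) β) := by
  ext u v
  simp only [Matrix.mul_apply, Matrix.of_apply, Matrix.map_apply]
  rw [hasseAt_sum]
  exact Finset.sum_congr rfl fun w _ => hasseAt_rename_mul _ _ _ _ _

end Aux2

/-- If `F(x)` is support-`ℓ` rank concentrated at `α` and `G(y)`
is support-`k` rank concentrated at `β` (derivatives of the matrices viewed as
vectors in `F^{r²}`), with `x`, `y` disjoint variable sets, then the product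
`F(x)·G(y)` is support-`(ℓ+k)` rank concentrated at `(α,β)`. -/
theorem stmt_13 {F : Type*} [Field F] {nx ny r ℓ k : ℕ}
    (Fm : Matrix (Fin r) (Fin r) (MvPolynomial (Fin nx) F))
    (G : Matrix (Fin r) (Fin r) (MvPolynomial (Fin ny) F))
    (α : Fin nx → F) (β : Fin ny → F)
    (hF : Submodule.span F
        {D : Matrix (Fin r) (Fin r) F | ∃ a : Fin nx →₀ ℕ,
          a.support.card ≤ ℓ ∧ D = Matrix.of fun u v => hasseAt (Fm u v) a α}
      = Submodule.span F
        {D : Matrix (Fin r) (Fin r) F | ∃ a : Fin nx →₀ ℕ,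
          D = Matrix.of fun u v => hasseAt (Fm u v) a α})
    (hG : Submodule.span F
        {D : Matrix (Fin r) (Fin r) F | ∃ b : Fin ny →₀ ℕ,
          b.support.card ≤ k ∧ D = Matrix.of fun u v => hasseAt (G u v) b β}
      = Submodule.span F
        {D : Matrix (Fin r) (Fin r) F | ∃ b : Fin ny →₀ ℕ,
          D = Matrix.of fun u v => hasseAt (G u v) b β}) :
    Submodule.span F
        {D : Matrix (Fin r) (Fin r) F | ∃ a : (Fin nx ⊕ Fin ny) →₀ ℕ,
          a.support.card ≤ ℓ + k ∧
          D = Matrix.of fun u v => hasseAt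
            (((Fm.map (MvPolynomial.rename Sum.inl) *
              G.map (MvPolynomial.rename Sum.inr) :
                Matrix (Fin r) (Fin r)
                  (MvPolynomial (Fin nx ⊕ Fin ny) F))) u v) a (Sum.elim α β)}
      = Submodule.span F
        {D : Matrix (Fin r) (Fin r) F | ∃ a : (Fin nx ⊕ Fin ny) →₀ ℕ,
          D = Matrix.of fun u v => hasseAt
            (((Fm.map (MvPolynomial.rename Sum.inl) *
              G.map (MvPolynomial.rename Sum.inr) :
                Matrix (Fin r) (Fin r)
                  (MvPolynomial (Fin nx ⊕ Fin ny) F))) u v) a (Sum.elim α β)} := by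
  set sF : Set (Matrix (Fin r) (Fin r) F) :=
    {D | ∃ a : Fin nx →₀ ℕ,
      a.support.card ≤ ℓ ∧ D = Matrix.of fun u v => hasseAt (Fm u v) a α} with hsF
  set sG : Set (Matrix (Fin r) (Fin r) F) :=
    {D | ∃ b : Fin ny →₀ ℕ,
      b.support.card ≤ k ∧ D = Matrix.of fun u v => hasseAt (G u v) b β} with hsG
  apply le_antisymm
  · exact Submodule.span_mono fun D ⟨a, _, h⟩ => ⟨a, h⟩
  · rw [Submodule.span_le]
    rintro D ⟨c, rfl⟩
    rw [matrix_hasse_mul]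
    have hmem : (Matrix.of fun u v =>
          hasseAt (Fm u v) (c.comapDomain Sum.inl Sum.inl_injective.injOn) α) *
        (Matrix.of fun u v =>
          hasseAt (G u v) (c.comapDomain Sum.inr Sum.inr_injective.injOn) β)
        ∈ Submodule.span F sF * Submodule.span F sG := by
      apply Submodule.mul_mem_mul
      · rw [hsF, hF]
        exact Submodule.subset_span ⟨_, rfl⟩
      · rw [hsG, hG]
        exact Submodule.subset_span ⟨_, rfl⟩
    rw [Submodule.span_mul_span] at hmem
    refine Submodule.span_le.mpr ?_ hmem
    rintro M ⟨A, ⟨a, ha, rfl⟩, B, ⟨b, hb, rfl⟩, rfl⟩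
    refine Submodule.subset_span ⟨Finsupp.sumElim a b,
      le_trans (support_sumElim_card_le a b) (add_le_add ha hb), ?_⟩
    rw [matrix_hasse_mul, comapDomain_sumElim_inl, comapDomain_sumElim_inr]
end

section
/- Let f = (f₁,…,f_r) ∈ F[x₁,…,x_n]^r be support-ℓ rank concentrated at α ∈ Fⁿ, and let g(x) = ∑_{i=1}^r β_i f_i for some β ∈ F^r. Then g is nonzero if and only if the shifted polynomial h(x) := g(x + α) has a nonzero coefficient on some monomial x^a with |a|₀ ≤ ℓ. -/
/-- If `f = (f₁,…,f_r)` is support-`ℓ` rank concentrated at `α`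
and `g = ∑ᵢ βᵢ fᵢ`, then `g ≠ 0` iff the shifted polynomial `h(x) = g(x+α)`
has a nonzero coefficient on some monomial of support at most `ℓ`. -/
theorem stmt_14 {F : Type*} [Field F] {n r ℓ : ℕ}
    (f : Fin r → MvPolynomial (Fin n) F) (α : Fin n → F)
    (hconc : Submodule.span F
        {v : Fin r → F | ∃ a : Fin n →₀ ℕ,
          a.support.card ≤ ℓ ∧ v = fun i => hasseAt (f i) a α}
      = Submodule.span F
        {v : Fin r → F | ∃ a : Fin n →₀ ℕ, v = fun i => hasseAt (f i) a α})
    (β : Fin r → F) (g : MvPolynomial (Fin n) F)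
    (hg : g = ∑ i : Fin r, MvPolynomial.C (β i) * f i) :
    g ≠ 0 ↔ ∃ a : Fin n →₀ ℕ, a.support.card ≤ ℓ ∧
      MvPolynomial.coeff a
        (MvPolynomial.bind₁
          (fun i => MvPolynomial.X i + MvPolynomial.C (α i)) g) ≠ 0 := by
  classical
  set s : Fin n → MvPolynomial (Fin n) F :=
    fun i => MvPolynomial.X i + MvPolynomial.C (α i) with hs
  -- the linear functional v ↦ ∑ βᵢ vᵢ
  let φ : (Fin r → F) →ₗ[F] F :=
    { toFun := fun v => ∑ i, β i * v i
      map_add' := by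
        intro u v; simp [mul_add, Finset.sum_add_distrib]
      map_smul' := by
        intro c v; simp [Finset.mul_sum, mul_left_comm, mul_comm] }
  -- coefficient formula
  have key : ∀ a : Fin n →₀ ℕ,
      MvPolynomial.coeff a (MvPolynomial.bind₁ s g)
        = φ (fun i => hasseAt (f i) a α) := by
    intro a
    subst hg
    simp [hasseAt, map_sum, MvPolynomial.coeff_sum, φ,
      MvPolynomial.coeff_C_mul, ← hs]
  -- the shift map is injective on g: bind₁ s g = 0 → g = 0
  have hinj : MvPolynomial.bind₁ s g = 0 → g = 0 := by
    intro h0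
    have := congrArg (MvPolynomial.bind₁
      (fun i => MvPolynomial.X i - MvPolynomial.C (α i))) h0
    rw [MvPolynomial.bind₁_bind₁] at this
    simpa [hs, map_add, MvPolynomial.bind₁_X_right, sub_add_cancel] using this
  constructor
  · intro hgne
    by_contra hno
    push_neg at hno
    -- φ vanishes on the low-support generating set
    have hvan : ∀ v ∈ {v : Fin r → F | ∃ a : Fin n →₀ ℕ,
        a.support.card ≤ ℓ ∧ v = fun i => hasseAt (f i) a α}, φ v = 0 := by
      rintro v ⟨a, hcard, rfl⟩
      rw [← key a]
      exact hno a hcard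
    -- hence φ vanishes on the full span
    have hspan : ∀ v ∈ Submodule.span F
        {v : Fin r → F | ∃ a : Fin n →₀ ℕ, v = fun i => hasseAt (f i) a α},
        φ v = 0 := by
      rw [← hconc]
      intro v hv
      refine Submodule.span_induction (fun x hx => hvan x hx) (map_zero φ)
        (fun x y _ _ hx hy => by rw [map_add, hx, hy, add_zero])
        (fun c x _ hx => by rw [map_smul, hx, smul_zero]) hv
    -- so all coefficients of the shift vanish
    have hall : ∀ a : Fin n →₀ ℕ,
        MvPolynomial.coeff a (MvPolynomial.bind₁ s g) = 0 := by
      intro a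
      rw [key a]
      exact hspan _ (Submodule.subset_span ⟨a, rfl⟩)
    exact hgne (hinj (MvPolynomial.ext _ _ (by simpa using hall)))
  · rintro ⟨a, -, hane⟩ rfl
    simp at hane
end
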